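/- Let $k \geq 2$ be an integer and let $G$ be a finite simple graph of order $n$ with a nonempty subset $S \subseteq V(G)$ such that, writing $s = |S|$ and $t = c(G-S)$, one has $t \geq 1$ and $t \geq \sum_{v \in S} d_G(v) - ks + 2$. Then $2e(G) \leq (n-s-t)(n-s-t+1) + 2t + 2ks - 4$. -/

import Mathlib

open SimpleGraph Finset

/-- The number of edges of a simple graph. -/
noncomputable def eCard {V : Type*} (G : SimpleGraph V) : ℕ := Nat.card G.edgeSet

/-- The number of connected components of `G - S`, the subgraph of `G` induced on the
complement of `S`. -/
noncomputable def numCompDel {V : Type*} (G : SimpleGraph V) (S : Set V) : ℕ :=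
  Nat.card (G.induce Sᶜ).ConnectedComponent

/-- `G` has the `k`-strong parity property: for every vertex subset `X` of even size, `G`
contains a spanning subgraph `F` whose degrees are odd on `X` and even and at least `k`
outside `X`. -/
def KStrongParity {V : Type*} [Fintype V] (k : ℕ) (G : SimpleGraph V) : Prop :=
  ∀ X : Finset V, Even X.card → ∃ F : SimpleGraph V, F ≤ G ∧
    (∀ u ∈ X, Odd (Nat.card (F.neighborSet u))) ∧
    (∀ v, v ∉ X → Even (Nat.card (F.neighborSet v)) ∧ k ≤ Nat.card (F.neighborSet v))

/-- The join `K_s ∨ (K_{n 0} ∪ K_{n 1} ∪ ⋯ ∪ K_{n (t-1)})` of a complete graph `K_s` with a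
disjoint union of complete graphs of sizes `n 0, …, n (t-1)`. -/
def GJoin (s : ℕ) {t : ℕ} (n : Fin t → ℕ) :
    SimpleGraph (Fin s ⊕ Σ i : Fin t, Fin (n i)) where
  Adj u v := u ≠ v ∧ (u.isLeft ∨ v.isLeft ∨
    ∃ i : Fin t, (∃ a, u = Sum.inr ⟨i, a⟩) ∧ (∃ b, v = Sum.inr ⟨i, b⟩))
  symm := by
    constructor
    rintro u v ⟨h1, h2⟩
    refine ⟨h1.symm, ?_⟩
    rcases h2 with h | h | ⟨i, ha, hb⟩
    · exact Or.inr (Or.inl h)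
    · exact Or.inl h
    · exact Or.inr (Or.inr ⟨i, hb, ha⟩)
  loopless := by constructor; rintro u ⟨h, -⟩; exact h rfl

/-- The graph `K_s ∨ (K_a ∪ m K_p)`. -/
def KJmix (s a m p : ℕ) :
    SimpleGraph (Fin s ⊕ Σ i : Fin (m + 1), Fin ((Fin.cons a (fun _ => p) : Fin (m+1) → ℕ) i)) :=
  GJoin s (Fin.cons a (fun _ => p) : Fin (m+1) → ℕ)

/-- The signless Laplacian spectral radius of `G`: the largest eigenvalue of
`Q(G) = D(G) + A(G)`. -/
noncomputable def qSpec {V : Type*} [Fintype V] [DecidableEq V] (G : SimpleGraph V)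
    [DecidableRel G.Adj] : ℝ :=
  sSup {x : ℝ | Module.End.HasEigenvalue
    (Matrix.toLin' (Matrix.diagonal (fun v => (G.degree v : ℝ)) + G.adjMatrix ℝ)) x}


lemma myaux_card_comp_le {W : Type*} [Finite W] (H : SimpleGraph W) :
    Nat.card H.ConnectedComponent ≤ Nat.card W :=
  Nat.card_le_card_of_surjective H.connectedComponentMk (fun c => c.exists_rep)

lemma myaux_sum_deg {W : Type*} [Fintype W] (H : SimpleGraph W) [DecidableRel H.Adj] :
    ∑ v : W, H.degree v ≤
      (Fintype.card W - Nat.card H.ConnectedComponent) *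
        (Fintype.card W - Nat.card H.ConnectedComponent + 1) := by
  classical
  letI : Fintype H.ConnectedComponent := Fintype.ofFinite _
  set t := Nat.card H.ConnectedComponent with htdef
  have htcard : t = Fintype.card H.ConnectedComponent := Nat.card_eq_fintype_card
  set f : H.ConnectedComponent → ℕ :=
    fun c => (univ.filter (fun v => H.connectedComponentMk v = c)).card with hf
  have hsum : ∑ c, f c = Fintype.card W := by
    have h := Finset.sum_fiberwise (univ : Finset W) H.connectedComponentMk (fun _ => (1 : ℕ))
    simp only [Finset.sum_const, smul_eq_mul, mul_one, Finset.card_univ] at h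
    exact h
  have hpos : ∀ c, 1 ≤ f c := by
    intro c
    obtain ⟨v, hv⟩ := c.exists_rep
    have : v ∈ univ.filter (fun v => H.connectedComponentMk v = c) := by
      simp only [Finset.mem_filter, Finset.mem_univ, true_and]
      exact hv
    exact Finset.card_pos.mpr ⟨v, this⟩
  have hdeg : ∀ v : W, H.degree v + 1 ≤ f (H.connectedComponentMk v) := by
    intro v
    have hsub : insert v (H.neighborFinset v) ⊆
        univ.filter (fun u => H.connectedComponentMk u = H.connectedComponentMk v) := by
      intro u hu
      simp only [Finset.mem_filter, Finset.mem_univ, true_and]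
      rcases Finset.mem_insert.mp hu with rfl | hu
      · rfl
      · have hadj : H.Adj v u := (H.mem_neighborFinset v u).mp hu
        exact (ConnectedComponent.eq).mpr hadj.symm.reachable
    have hcard := Finset.card_le_card hsub
    rw [Finset.card_insert_of_notMem (H.notMem_neighborFinset_self v)] at hcard
    exact hcard
  have hgroup : ∑ v : W, H.degree v ≤ ∑ c, f c * (f c - 1) := by
    rw [← Finset.sum_fiberwise (univ : Finset W) H.connectedComponentMk (fun v => H.degree v)]
    apply Finset.sum_le_sum
    intro c _
    calc ∑ v ∈ univ.filter (fun v => H.connectedComponentMk v = c), H.degree v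
        ≤ ∑ _v ∈ univ.filter (fun v => H.connectedComponentMk v = c), (f c - 1) := by
          apply Finset.sum_le_sum
          intro v hv
          have hvc : H.connectedComponentMk v = c := (Finset.mem_filter.mp hv).2
          have := hdeg v
          rw [hvc] at this
          omega
      _ = f c * (f c - 1) := by rw [Finset.sum_const, smul_eq_mul]
  refine hgroup.trans ?_
  set A : ℕ := Fintype.card W - t with hA
  have h1 : ∑ c, (f c - 1 + 1) = ∑ c, f c := by
    apply Finset.sum_congr rfl
    intro c _
    have := hpos c
    omega
  rw [Finset.sum_add_distrib, Finset.sum_const, smul_eq_mul, mul_one, Finset.card_univ,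
    ← htcard, hsum] at h1
  have hAsum : ∑ c, (f c - 1) = A := by omega
  calc ∑ c, f c * (f c - 1)
      ≤ ∑ c, ((f c - 1) * A + (f c - 1)) := by
        apply Finset.sum_le_sum
        intro c _
        have hle : f c - 1 ≤ A := by
          rw [← hAsum]
          exact Finset.single_le_sum (f := fun c => f c - 1) (fun i _ => Nat.zero_le _)
            (Finset.mem_univ c)
        obtain ⟨b, hb⟩ : ∃ b, f c = b + 1 := ⟨f c - 1, by have := hpos c; omega⟩
        rw [hb] at hle ⊢
        simp only [Nat.add_sub_cancel] at hle ⊢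
        calc (b + 1) * b = b * b + b := by ring
          _ ≤ b * A + b := Nat.add_le_add_right (Nat.mul_le_mul_left _ hle) _
    _ = A * A + A := by rw [Finset.sum_add_distrib, ← Finset.sum_mul, hAsum]
    _ = A * (A + 1) := by ring

theorem two_eCard_le (k : ℕ) (hk : 2 ≤ k)
    {V : Type*} [Fintype V] (G : SimpleGraph V) [DecidableRel G.Adj]
    (S : Finset V) (hS : S.Nonempty) (ht1 : 1 ≤ numCompDel G ↑S)
    (ht : (∑ v ∈ S, (G.degree v : ℤ)) - k * S.card + 2 ≤ (numCompDel G ↑S : ℤ)) :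
    2 * (eCard G : ℤ)
      ≤ ((Fintype.card V : ℤ) - S.card - numCompDel G ↑S)
          * ((Fintype.card V : ℤ) - S.card - numCompDel G ↑S + 1)
        + 2 * (numCompDel G ↑S : ℤ) + 2 * k * S.card - 4 := by
  classical
  set H : SimpleGraph ((↑S : Set V)ᶜ : Set V) := G.induce (↑S : Set V)ᶜ with hH
  set n := Fintype.card V with hn
  set s := S.card with hs
  set t := numCompDel G ↑S with htdef
  have htc : t = Nat.card H.ConnectedComponent := rfl
  set m := Fintype.card ((↑S : Set V)ᶜ : Set V) with hm
  -- edge count via degree sum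
  have hE : ∑ v : V, G.degree v = 2 * eCard G := by
    rw [SimpleGraph.sum_degrees_eq_twice_card_edges]
    congr 1
    rw [eCard, Nat.card_eq_fintype_card, SimpleGraph.edgeFinset, Set.toFinset_card]
  -- per-vertex degree split
  have hdegsplit : ∀ v : V,
      G.degree v = (S.filter (G.Adj v)).card + (Sᶜ.filter (G.Adj v)).card := by
    intro v
    have hdv : G.degree v = (univ.filter (G.Adj v)).card := by
      rw [← SimpleGraph.neighborFinset_eq_filter]; rfl
    rw [hdv, ← Finset.union_compl S, Finset.filter_union,
      Finset.card_union_of_disjoint (Finset.disjoint_filter_filter disjoint_compl_right)]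
  -- cross edges counted both ways
  have hcross : ∑ v ∈ Sᶜ, (S.filter (G.Adj v)).card
      = ∑ u ∈ S, (Sᶜ.filter (G.Adj u)).card := by
    simp_rw [Finset.card_filter]
    rw [Finset.sum_comm]
    refine Finset.sum_congr rfl fun u _ => Finset.sum_congr rfl fun v _ => ?_
    exact if_congr (G.adj_comm v u) rfl rfl
  have hcross_le : ∑ u ∈ S, (Sᶜ.filter (G.Adj u)).card ≤ ∑ u ∈ S, G.degree u := by
    refine Finset.sum_le_sum fun u _ => ?_
    have : Sᶜ.filter (G.Adj u) ⊆ G.neighborFinset u := fun v hv =>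
      (G.mem_neighborFinset u v).mpr (Finset.mem_filter.mp hv).2
    exact Finset.card_le_card this
  -- edges inside the complement
  have hterm2 : ∑ v ∈ Sᶜ, (Sᶜ.filter (G.Adj v)).card
      = ∑ x : ((↑S : Set V)ᶜ : Set V), H.degree x := by
    rw [Finset.sum_subtype (p := fun v => v ∈ ((↑S : Set V)ᶜ : Set V))
      Sᶜ (by intro x; simp) (fun v => (Sᶜ.filter (G.Adj v)).card)]
    refine Finset.sum_congr rfl fun x _ => ?_
    have hmap : (H.neighborFinset x).map (Function.Embedding.subtype _)
        = Sᶜ.filter (G.Adj ↑x) := by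
      ext v
      simp only [Finset.mem_map, SimpleGraph.mem_neighborFinset, Finset.mem_filter,
        Finset.mem_compl, Function.Embedding.coe_subtype]
      constructor
      · rintro ⟨y, hy, rfl⟩
        exact ⟨y.2, hy⟩
      · rintro ⟨hv, hadj⟩
        exact ⟨⟨v, by simpa using hv⟩, hadj, rfl⟩
    rw [← hmap, Finset.card_map]
    rfl
  -- assemble in ℕ
  have hsplit : (2 : ℕ) * eCard G
      ≤ 2 * (∑ v ∈ S, G.degree v) + ∑ x : ((↑S : Set V)ᶜ : Set V), H.degree x := by
    have h0 : ∑ v : V, G.degree v = ∑ v ∈ S, G.degree v + ∑ v ∈ Sᶜ, G.degree v :=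
      (Finset.sum_add_sum_compl S _).symm
    have h1 : ∑ v ∈ Sᶜ, G.degree v
        = ∑ v ∈ Sᶜ, (S.filter (G.Adj v)).card + ∑ v ∈ Sᶜ, (Sᶜ.filter (G.Adj v)).card := by
      rw [← Finset.sum_add_distrib]
      exact Finset.sum_congr rfl fun v _ => hdegsplit v
    omega
  have htop := myaux_sum_deg H
  rw [← htc, ← hm] at htop
  have htm : t ≤ m := by
    have := myaux_card_comp_le H
    rwa [← htc, Nat.card_eq_fintype_card, ← hm] at this
  have hmns : m = n - s := by
    rw [hm, Fintype.card_compl_set, hn, hs]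
    congr 1
    simp
  have hsn : s ≤ n := by rw [hs, hn]; exact Finset.card_le_univ S
  set A := m - t with hAdef
  have hAint : ((A : ℕ) : ℤ) = (n : ℤ) - s - t := by omega
  rw [← hAint]
  have hfinal : (2 : ℕ) * eCard G ≤ 2 * (∑ v ∈ S, G.degree v) + A * (A + 1) :=
    hsplit.trans (by omega)
  have hcast : (2 : ℤ) * eCard G ≤ 2 * (∑ v ∈ S, (G.degree v : ℤ)) + A * (A + 1) := by
    have := hfinal
    push_cast at this ⊢
    convert this using 2
    norm_cast
  nlinarith [ht, hcast]
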